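/- Let H > 0, let c ∈ C²([0,H]) with 0 < c_m ≤ c(y) ≤ c_M for all y, let 0 < ε < Λ, and let (a,b) ⊆ (0,H). Then there exist μ₀ > 0 and d > 0 such that for every μ ≥ μ₀, every λ with (c_M + ε) μ² ≤ λ ≤ (c_M + Λ) μ², and every normalized reduced eigenfunction u for (c, μ, λ), one has ∫_a^b u(y)² c(y)⁻¹ dy ≥ d. -/

import Mathlib

open Set MeasureTheory Filter

lemma gron17 {A B K : ℝ} (hK : 0 ≤ K) {F F' : ℝ → ℝ}
    (hcont : ContinuousOn F (Set.Icc A B))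
    (hF : ∀ y ∈ Set.Icc A B, HasDerivWithinAt F (F' y) (Set.Icc A B) y)
    (hF0 : ∀ y ∈ Set.Icc A B, 0 ≤ F y)
    (hb : ∀ y ∈ Set.Icc A B, |F' y| ≤ K * F y) :
    ∀ x ∈ Set.Icc A B, ∀ y ∈ Set.Icc A B, F x ≤ Real.exp (K * (B - A)) * F y := by
  have hDF : ∀ y ∈ Set.Ioo A B, HasDerivAt F (F' y) y := fun y hy =>
    (hF y (Ioo_subset_Icc_self hy)).hasDerivAt (Icc_mem_nhds hy.1 hy.2)
  have hexp : ∀ (s : ℝ) (y : ℝ), HasDerivAt (fun z => Real.exp (s * z)) (Real.exp (s * y) * s) y :=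
    fun s y => by simpa using ((hasDerivAt_id y).const_mul s).exp
  have mono2 : MonotoneOn (fun y => Real.exp (K * y) * F y) (Set.Icc A B) := by
    apply monotoneOn_of_hasDerivWithinAt_nonneg (convex_Icc A B)
      (((Real.continuous_exp.comp (continuous_const.mul continuous_id)).continuousOn).mul hcont)
      (f' := fun y => Real.exp (K * y) * K * F y + Real.exp (K * y) * F' y)
    · intro x hx
      rw [interior_Icc] at hx ⊢
      exact (((hexp K x).mul (hDF x hx)).hasDerivWithinAt)
    · intro x hx
      rw [interior_Icc] at hx
      have h1 := hb x (Ioo_subset_Icc_self hx)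
      have h2 := neg_abs_le (F' x)
      have h3 := Real.exp_pos (K * x)
      nlinarith [hF0 x (Ioo_subset_Icc_self hx)]
  have anti1 : AntitoneOn (fun y => Real.exp (-K * y) * F y) (Set.Icc A B) := by
    apply antitoneOn_of_hasDerivWithinAt_nonpos (convex_Icc A B)
      (((Real.continuous_exp.comp (continuous_const.mul continuous_id)).continuousOn).mul hcont)
      (f' := fun y => Real.exp (-K * y) * (-K) * F y + Real.exp (-K * y) * F' y)
    · intro x hx
      rw [interior_Icc] at hx ⊢
      exact (((hexp (-K) x).mul (hDF x hx)).hasDerivWithinAt)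
    · intro x hx
      rw [interior_Icc] at hx
      have h1 := hb x (Ioo_subset_Icc_self hx)
      have h2 := le_abs_self (F' x)
      have h3 := Real.exp_pos (-K * x)
      nlinarith [hF0 x (Ioo_subset_Icc_self hx)]
  intro x hx y hy
  rcases le_total x y with hxy | hxy
  · have h1 : Real.exp (K*x)*F x ≤ Real.exp (K*y)*F y := mono2 hx hy hxy
    have h2 : Real.exp (K * x) > 0 := Real.exp_pos _
    have h3 : F x ≤ Real.exp (K * y - K * x) * F y := by
      rw [Real.exp_sub, div_mul_eq_mul_div, le_div_iff₀ h2]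
      linarith [h1, mul_comm (F x) (Real.exp (K * x))]
    refine h3.trans (mul_le_mul_of_nonneg_right ?_ (hF0 y hy))
    apply Real.exp_le_exp.2
    nlinarith [hx.1, hy.2, hx.2, hy.1]
  · have h1 : Real.exp (-K*x)*F x ≤ Real.exp (-K*y)*F y := anti1 hy hx hxy
    have h2 : Real.exp (-K * x) > 0 := Real.exp_pos _
    have h3 : F x ≤ Real.exp (-K * y - -K * x) * F y := by
      rw [Real.exp_sub, div_mul_eq_mul_div, le_div_iff₀ h2]
      linarith [h1, mul_comm (F x) (Real.exp (-K * x))]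
    refine h3.trans (mul_le_mul_of_nonneg_right ?_ (hF0 y hy))
    apply Real.exp_le_exp.2
    nlinarith [hx.1, hy.2, hx.2, hy.1]

lemma arith17a {eps mu cM cy lam : ℝ} (heps : 0 < eps) (hcM : 0 < cM) (hcy : 0 < cy)
    (h1 : cy ≤ cM) (hlam : (cM + eps) * mu ^ 2 ≤ lam) :
    eps * mu ^ 2 / cM ≤ (lam - cy * mu ^ 2) / cy := by
  rw [div_le_div_iff₀ hcM hcy]
  nlinarith [mul_le_mul_of_nonneg_right hlam hcM.le, sq_nonneg mu,
    mul_le_mul_of_nonneg_left h1 (mul_nonneg heps.le (sq_nonneg mu)),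
    mul_le_mul_of_nonneg_right h1 (mul_nonneg (sq_nonneg mu) hcM.le)]

lemma arith17b {cm cMΛ mu cy lam : ℝ} (hcm : 0 < cm) (h2 : cm ≤ cy) (hcy : 0 < cy)
    (hcMΛ : 0 ≤ cMΛ) (hlam : lam ≤ cMΛ * mu ^ 2) :
    (lam - cy * mu ^ 2) / cy ≤ (cMΛ / cm - 1) * mu ^ 2 := by
  rw [div_le_iff₀ hcy]
  have ht : cMΛ / cm * cm = cMΛ := div_mul_cancel₀ _ hcm.ne'
  have h5 : cMΛ ≤ cMΛ / cm * cy := by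
    calc cMΛ = cMΛ / cm * cm := ht.symm
    _ ≤ cMΛ / cm * cy := mul_le_mul_of_nonneg_left h2 (by positivity)
  have h6 := mul_le_mul_of_nonneg_right h5 (sq_nonneg mu)
  nlinarith [h6, hlam]

set_option maxHeartbeats 1000000 in
theorem stmt17
    (H c_m c_M ε Λ a b : ℝ) (c c' c'' : ℝ → ℝ)
    (hH : 0 < H) (hcm : 0 < c_m) (hcmM : c_m ≤ c_M)
    (hcbounds : ∀ y ∈ Set.Icc (0:ℝ) H, c_m ≤ c y ∧ c y ≤ c_M)
    (hc1 : ∀ y ∈ Set.Icc (0:ℝ) H, HasDerivWithinAt c (c' y) (Set.Icc (0:ℝ) H) y)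
    (hc2 : ∀ y ∈ Set.Icc (0:ℝ) H, HasDerivWithinAt c' (c'' y) (Set.Icc (0:ℝ) H) y)
    (hc''cont : ContinuousOn c'' (Set.Icc (0:ℝ) H))
    (hε : 0 < ε) (hεΛ : ε < Λ)
    (ha : 0 ≤ a) (hab : a < b) (hb : b ≤ H) :
    ∃ μ₀ : ℝ, 0 < μ₀ ∧ ∃ d : ℝ, 0 < d ∧
      ∀ (μ lam : ℝ) (u u' u'' : ℝ → ℝ),
        μ₀ ≤ μ → (c_M + ε) * μ ^ 2 ≤ lam → lam ≤ (c_M + Λ) * μ ^ 2 →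
        (∀ y ∈ Set.Icc (0:ℝ) H, HasDerivWithinAt u (u' y) (Set.Icc (0:ℝ) H) y) →
        (∀ y ∈ Set.Icc (0:ℝ) H, HasDerivWithinAt u' (u'' y) (Set.Icc (0:ℝ) H) y) →
        ContinuousOn u'' (Set.Icc (0:ℝ) H) →
        (∀ y ∈ Set.Icc (0:ℝ) H, c y * u'' y + (lam - c y * μ ^ 2) * u y = 0) →
        u 0 = 0 → u H = 0 → (∃ y ∈ Set.Icc (0:ℝ) H, u y ≠ 0) →
        (∫ y in (0:ℝ)..H, (u y) ^ 2 / c y) = 1 →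
        d ≤ ∫ y in a..b, (u y) ^ 2 / c y := by
  have hcM : 0 < c_M := lt_of_lt_of_le hcm hcmM
  have hΛ : 0 < Λ := hε.trans hεΛ
  have hba : (0:ℝ) < b - a := sub_pos.2 hab
  have hc'cont : ContinuousOn c' (Set.Icc 0 H) := fun y hy => (hc2 y hy).continuousWithinAt
  have hccont : ContinuousOn c (Set.Icc 0 H) := fun y hy => (hc1 y hy).continuousWithinAt
  have hc_pos : ∀ y ∈ Set.Icc (0:ℝ) H, 0 < c y := fun y hy => lt_of_lt_of_le hcm (hcbounds y hy).1
  obtain ⟨yc, hyc, hycmax⟩ := isCompact_Icc.exists_isMaxOn (nonempty_Icc.2 hH.le) hc'cont.abs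
  set C' := |c' yc| with hC'def
  have hC'0 : 0 ≤ C' := abs_nonneg _
  have hC' : ∀ y ∈ Set.Icc (0:ℝ) H, |c' y| ≤ C' := fun y hy => hycmax hy
  set K := (c_M + Λ) * C' * c_M / (ε * c_m ^ 2) with hKdef
  have hK0 : 0 ≤ K := by positivity
  set R' := (c_M + Λ) / c_m - 1 with hR'def
  have hR'0 : 0 < R' := by
    rw [hR'def, sub_pos]
    exact (one_lt_div hcm).2 (by linarith)
  set R := R' * c_M / ε with hRdef
  have hR0 : 0 < R := by positivity
  set E := Real.exp (K * H) with hEdef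
  have hE0 : 0 < E := Real.exp_pos _
  have hE1 : 1 ≤ E := Real.one_le_exp (by positivity)
  set M₁ := c_M * (1 + R) with hM₁def
  have hM₁0 : 0 < M₁ := by positivity
  set M₂ := E * M₁ / H with hM₂def
  have hM₂0 : 0 < M₂ := by positivity
  set F₀ := c_m / (H * E) with hF₀def
  have hF₀0 : 0 < F₀ := by positivity
  set sR := Real.sqrt R' with hsRdef
  have hsR0 : 0 ≤ sR := Real.sqrt_nonneg _
  have hsR2 : sR ^ 2 = R' := Real.sq_sqrt hR'0.le
  set C₃ := 2 * M₂ * sR * c_M / ε with hC₃def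
  have hC₃0 : 0 ≤ C₃ := by positivity
  refine ⟨max 1 (2 * C₃ / ((b - a) * F₀) + 1), lt_of_lt_of_le one_pos (le_max_left _ _),
    (b - a) * F₀ / (2 * (1 + R) * c_M), by positivity, ?_⟩
  intro μ lam u u' u'' hμ hlam1 hlam2 hu1 hu2 hu''c heq hu0 huH _hne hnorm
  have hμ1 : (1:ℝ) ≤ μ := le_trans (le_max_left _ _) hμ
  have hμ0 : (0:ℝ) < μ := lt_of_lt_of_le one_pos hμ1
  have hlam0 : 0 < lam := lt_of_lt_of_le (by positivity) hlam1
  have hucont : ContinuousOn u (Set.Icc 0 H) := fun y hy => (hu1 y hy).continuousWithinAt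
  have hu'cont : ContinuousOn u' (Set.Icc 0 H) := fun y hy => (hu2 y hy).continuousWithinAt
  set q : ℝ → ℝ := fun y => lam / c y - μ ^ 2 with hqdef
  have hq_eq : ∀ y ∈ Set.Icc (0:ℝ) H, q y = (lam - c y * μ ^ 2) / c y := by
    intro y hy
    have := (hc_pos y hy).ne'
    rw [hqdef]
    field_simp
  have hqm : ∀ y ∈ Set.Icc (0:ℝ) H, ε * μ ^ 2 / c_M ≤ q y := by
    intro y hy
    have h1 := (hcbounds y hy).2
    have h2 := (hcbounds y hy).1
    have hcy := hc_pos y hy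
    rw [hq_eq y hy]
    exact arith17a hε hcM hcy h1 hlam1
  have hqM : ∀ y ∈ Set.Icc (0:ℝ) H, q y ≤ R' * μ ^ 2 := by
    intro y hy
    have h2 := (hcbounds y hy).1
    have hcy := hc_pos y hy
    rw [hq_eq y hy, hR'def]
    exact arith17b hcm h2 hcy (by positivity) hlam2
  have hqm0 : (0:ℝ) < ε * μ ^ 2 / c_M := by positivity
  have hq0 : ∀ y ∈ Set.Icc (0:ℝ) H, 0 < q y := fun y hy => lt_of_lt_of_le hqm0 (hqm y hy)
  set q' : ℝ → ℝ := fun y => -(lam * c' y) / c y ^ 2 with hq'def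
  have hqD : ∀ y ∈ Set.Icc (0:ℝ) H, HasDerivWithinAt q (q' y) (Set.Icc (0:ℝ) H) y := by
    intro y hy
    have h := ((hasDerivWithinAt_const y (Set.Icc (0:ℝ) H) lam).div (hc1 y hy)
      (hc_pos y hy).ne').sub_const (μ ^ 2)
    refine h.congr_deriv ?_
    rw [hq'def]
    ring
  have hq'b : ∀ y ∈ Set.Icc (0:ℝ) H, |q' y| ≤ K * q y := by
    intro y hy
    have hcy := hc_pos y hy
    have h2 := (hcbounds y hy).1
    have habs : |q' y| = lam * |c' y| / c y ^ 2 := by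
      rw [hq'def, abs_div, abs_neg, abs_mul, abs_of_pos hlam0, abs_of_pos (pow_pos hcy 2)]
    rw [habs]
    have step1 : lam * |c' y| / c y ^ 2 ≤ (c_M + Λ) * μ ^ 2 * C' / c_m ^ 2 := by
      apply div_le_div₀ (by positivity) ?_ (by positivity) (pow_le_pow_left₀ hcm.le h2 2)
      calc lam * |c' y| ≤ ((c_M + Λ) * μ ^ 2) * |c' y| :=
            mul_le_mul_of_nonneg_right hlam2 (abs_nonneg _)
        _ ≤ ((c_M + Λ) * μ ^ 2) * C' := mul_le_mul_of_nonneg_left (hC' y hy) (by positivity)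
    have step2 : (c_M + Λ) * μ ^ 2 * C' / c_m ^ 2 = K * (ε * μ ^ 2 / c_M) := by
      rw [hKdef]; field_simp
    calc lam * |c' y| / c y ^ 2 ≤ (c_M + Λ) * μ ^ 2 * C' / c_m ^ 2 := step1
      _ = K * (ε * μ ^ 2 / c_M) := step2
      _ ≤ K * q y := mul_le_mul_of_nonneg_left (hqm y hy) hK0
  have hueq : ∀ y ∈ Set.Icc (0:ℝ) H, u'' y = -(q y * u y) := by
    intro y hy
    have h := heq y hy
    have hcy := (hc_pos y hy).ne'
    rw [hq_eq y hy, div_mul_eq_mul_div, ← neg_div, eq_div_iff hcy]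
    linarith [h, mul_comm (u'' y) (c y)]
  have hqcont : ContinuousOn q (Set.Icc (0:ℝ) H) := by
    rw [hqdef]
    exact (continuousOn_const.div hccont fun y hy => (hc_pos y hy).ne').sub continuousOn_const
  set F : ℝ → ℝ := fun y => u y ^ 2 + u' y ^ 2 / q y with hFdef
  set Fd : ℝ → ℝ := fun y => -(u' y ^ 2 * q' y) / q y ^ 2 with hFddef
  have hF0 : ∀ y ∈ Set.Icc (0:ℝ) H, 0 ≤ F y := fun y hy =>
    add_nonneg (sq_nonneg _) (div_nonneg (sq_nonneg _) (hq0 y hy).le)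
  have hFcont : ContinuousOn F (Set.Icc (0:ℝ) H) := by
    rw [hFdef]
    exact ((hucont.pow 2)).add ((hu'cont.pow 2).div hqcont fun y hy => (hq0 y hy).ne')
  have hFD : ∀ y ∈ Set.Icc (0:ℝ) H, HasDerivWithinAt F (Fd y) (Set.Icc (0:ℝ) H) y := by
    intro y hy
    have h1 := (hu1 y hy).pow 2
    have h2 := ((hu2 y hy).pow 2).div (hqD y hy) (hq0 y hy).ne'
    have h3 := h1.add h2
    refine h3.congr_deriv ?_
    have hqy := (hq0 y hy).ne'
    rw [hFddef, hueq y hy, Pi.pow_apply]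
    field_simp
    ring
  have hF'b : ∀ y ∈ Set.Icc (0:ℝ) H, |Fd y| ≤ K * F y := by
    intro y hy
    have hqy := hq0 y hy
    have habs : |Fd y| = u' y ^ 2 * |q' y| / q y ^ 2 := by
      rw [hFddef, abs_div, abs_neg, abs_mul, abs_of_nonneg (sq_nonneg (u' y)),
        abs_of_pos (pow_pos hqy 2)]
    rw [habs, hFdef]
    have step1 : u' y ^ 2 * |q' y| / q y ^ 2 ≤ u' y ^ 2 * (K * q y) / q y ^ 2 := by
      gcongr u' y ^ 2 * ?_ / q y ^ 2
      exact hq'b y hy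
    have step2 : u' y ^ 2 * (K * q y) / q y ^ 2 = K * (u' y ^ 2 / q y) := by
      field_simp
    calc u' y ^ 2 * |q' y| / q y ^ 2 ≤ K * (u' y ^ 2 / q y) := by rw [← step2]; exact step1
      _ ≤ K * (u y ^ 2 + u' y ^ 2 / q y) := by
          have := mul_nonneg hK0 (sq_nonneg (u y))
          linarith [this, mul_add K (u y ^ 2) (u' y ^ 2 / q y)]
  have hcomp : ∀ x ∈ Set.Icc (0:ℝ) H, ∀ y ∈ Set.Icc (0:ℝ) H, F x ≤ E * F y := by
    have := gron17 hK0 hFcont hFD hF0 hF'b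
    intro x hx y hy
    have h := this x hx y hy
    rwa [show K * (H - 0) = K * H by ring, ← hEdef] at h
  -- integrability helper
  have hII : ∀ f : ℝ → ℝ, ContinuousOn f (Set.Icc (0:ℝ) H) → ∀ s t : ℝ,
      s ∈ Set.Icc (0:ℝ) H → t ∈ Set.Icc (0:ℝ) H → IntervalIntegrable f volume s t :=
    fun f hf s t hs ht => (hf.mono (uIcc_subset_Icc hs ht)).intervalIntegrable
  have h0mem : (0:ℝ) ∈ Set.Icc (0:ℝ) H := ⟨le_refl 0, hH.le⟩
  have hHmem : H ∈ Set.Icc (0:ℝ) H := ⟨hH.le, le_refl H⟩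
  have hamem : a ∈ Set.Icc (0:ℝ) H := ⟨ha, le_trans hab.le hb⟩
  have hbmem : b ∈ Set.Icc (0:ℝ) H := ⟨le_trans ha hab.le, hb⟩
  have habH : Set.Icc a b ⊆ Set.Icc (0:ℝ) H := Icc_subset_Icc ha hb
  have cu2 : ContinuousOn (fun y => u y ^ 2) (Set.Icc (0:ℝ) H) := hucont.pow 2
  have cu'2 : ContinuousOn (fun y => u' y ^ 2) (Set.Icc (0:ℝ) H) := hu'cont.pow 2
  have cuc : ContinuousOn (fun y => u y ^ 2 / c y) (Set.Icc (0:ℝ) H) :=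
    cu2.div hccont (fun y hy => (hc_pos y hy).ne')
  have cqu2 : ContinuousOn (fun y => q y * u y ^ 2) (Set.Icc (0:ℝ) H) := hqcont.mul cu2
  have cu'q : ContinuousOn (fun y => u' y ^ 2 / q y) (Set.Icc (0:ℝ) H) :=
    cu'2.div hqcont (fun y hy => (hq0 y hy).ne')
  have csub : ContinuousOn (fun y => u' y ^ 2 - q y * u y ^ 2) (Set.Icc (0:ℝ) H) :=
    cu'2.sub cqu2
  have hFTC : ∀ s t : ℝ, s ∈ Set.Icc (0:ℝ) H → t ∈ Set.Icc (0:ℝ) H → s ≤ t →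
      (∫ y in s..t, (u' y ^ 2 - q y * u y ^ 2)) = u t * u' t - u s * u' s := by
    intro s t hs ht hst
    apply intervalIntegral.integral_eq_sub_of_hasDeriv_right_of_le hst
    · exact (hucont.mul hu'cont).mono (Icc_subset_Icc hs.1 ht.2)
    · intro x hx
      have hx0 : x ∈ Set.Ioo (0:ℝ) H := ⟨lt_of_le_of_lt hs.1 hx.1, lt_of_lt_of_le hx.2 ht.2⟩
      have hxm := Ioo_subset_Icc_self hx0
      have hdu : HasDerivAt u (u' x) x := (hu1 x hxm).hasDerivAt (Icc_mem_nhds hx0.1 hx0.2)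
      have hdu' : HasDerivAt u' (u'' x) x := (hu2 x hxm).hasDerivAt (Icc_mem_nhds hx0.1 hx0.2)
      have h := hdu.mul hdu'
      have he : u' x * u' x + u x * u'' x = u' x ^ 2 - q x * u x ^ 2 := by
        rw [hueq x hxm]; ring
      rw [he] at h
      exact h.hasDerivWithinAt
    · exact hII _ csub s t hs ht
  have hA1 : (∫ y in (0:ℝ)..H, u y ^ 2) ≤ c_M := by
    have hmono : (∫ y in (0:ℝ)..H, u y ^ 2) ≤ ∫ y in (0:ℝ)..H, c_M * (u y ^ 2 / c y) := by
      apply intervalIntegral.integral_mono_on hH.le (hII _ cu2 0 H h0mem hHmem)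
        (hII _ (continuousOn_const.mul cuc) 0 H h0mem hHmem)
      intro y hy
      have hcy := hc_pos y hy
      have h2 := (hcbounds y hy).2
      simp only [Pi.mul_apply]
      rw [← mul_div_assoc, le_div_iff₀ hcy]
      have := mul_le_mul_of_nonneg_left h2 (sq_nonneg (u y))
      linarith [mul_comm (u y ^ 2) c_M]
    rw [intervalIntegral.integral_const_mul, hnorm, mul_one] at hmono
    exact hmono
  have hA2 : (∫ y in (0:ℝ)..H, u' y ^ 2) = ∫ y in (0:ℝ)..H, q y * u y ^ 2 := by
    have h0 : (∫ y in (0:ℝ)..H, (u' y ^ 2 - q y * u y ^ 2)) = 0 := by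
      rw [hFTC 0 H h0mem hHmem hH.le, hu0, huH]; ring
    rw [intervalIntegral.integral_sub (hII _ cu'2 0 H h0mem hHmem)
      (hII _ cqu2 0 H h0mem hHmem)] at h0
    linarith
  have hA3 : (∫ y in (0:ℝ)..H, q y * u y ^ 2) ≤ R' * μ ^ 2 * c_M := by
    have hmono : (∫ y in (0:ℝ)..H, q y * u y ^ 2) ≤ ∫ y in (0:ℝ)..H, (R' * μ ^ 2) * u y ^ 2 :=
      intervalIntegral.integral_mono_on hH.le (hII _ cqu2 0 H h0mem hHmem)
        (hII _ (continuousOn_const.mul cu2) 0 H h0mem hHmem)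
        (fun y hy => mul_le_mul_of_nonneg_right (hqM y hy) (sq_nonneg _))
    rw [intervalIntegral.integral_const_mul] at hmono
    have := mul_le_mul_of_nonneg_left hA1 (by positivity : (0:ℝ) ≤ R' * μ ^ 2)
    linarith
  have hpoint4 : ∀ y ∈ Set.Icc (0:ℝ) H, u' y ^ 2 / q y ≤ (c_M / (ε * μ ^ 2)) * u' y ^ 2 := by
    intro y hy
    have h1 : u' y ^ 2 / q y ≤ u' y ^ 2 / (ε * μ ^ 2 / c_M) := by
      gcongr
      exact hqm y hy
    have h2 : u' y ^ 2 / (ε * μ ^ 2 / c_M) = (c_M / (ε * μ ^ 2)) * u' y ^ 2 := by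
      field_simp
    linarith
  have hA4 : (∫ y in (0:ℝ)..H, u' y ^ 2 / q y) ≤ R * c_M := by
    have hmono : (∫ y in (0:ℝ)..H, u' y ^ 2 / q y)
        ≤ ∫ y in (0:ℝ)..H, (c_M / (ε * μ ^ 2)) * u' y ^ 2 :=
      intervalIntegral.integral_mono_on hH.le (hII _ cu'q 0 H h0mem hHmem)
        (hII _ (continuousOn_const.mul cu'2) 0 H h0mem hHmem)
        (fun y hy => hpoint4 y hy)
    rw [intervalIntegral.integral_const_mul] at hmono
    have h3 : (c_M / (ε * μ ^ 2)) * (∫ y in (0:ℝ)..H, u' y ^ 2)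
        ≤ (c_M / (ε * μ ^ 2)) * (R' * μ ^ 2 * c_M) := by
      apply mul_le_mul_of_nonneg_left _ (by positivity)
      rw [hA2]; exact hA3
    have heqv : (c_M / (ε * μ ^ 2)) * (R' * μ ^ 2 * c_M) = R * c_M := by
      rw [hRdef]; field_simp
    linarith
  have hFsplit : ∀ s t : ℝ, s ∈ Set.Icc (0:ℝ) H → t ∈ Set.Icc (0:ℝ) H →
      (∫ y in s..t, F y) = (∫ y in s..t, u y ^ 2) + ∫ y in s..t, u' y ^ 2 / q y := by
    intro s t hs ht
    simp only [hFdef]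
    exact intervalIntegral.integral_add (hII _ cu2 s t hs ht) (hII _ cu'q s t hs ht)
  have hA5 : (∫ y in (0:ℝ)..H, F y) ≤ M₁ := by
    rw [hFsplit 0 H h0mem hHmem, hM₁def]
    have : c_M * (1 + R) = c_M + R * c_M := by ring
    linarith
  have hA8 : c_m ≤ ∫ y in (0:ℝ)..H, F y := by
    have hmono : (∫ y in (0:ℝ)..H, c_m * (u y ^ 2 / c y)) ≤ ∫ y in (0:ℝ)..H, F y := by
      apply intervalIntegral.integral_mono_on hH.le
        (hII _ (continuousOn_const.mul cuc) 0 H h0mem hHmem) (hII _ hFcont 0 H h0mem hHmem)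
      intro y hy
      have hcy := hc_pos y hy
      have heqc : c y * (u y ^ 2 / c y) = u y ^ 2 := by field_simp
      have h1 := mul_le_mul_of_nonneg_right (hcbounds y hy).1
        (div_nonneg (sq_nonneg (u y)) hcy.le)
      have h2 : 0 ≤ u' y ^ 2 / q y := div_nonneg (sq_nonneg _) (hq0 y hy).le
      simp only [hFdef, Pi.mul_apply]
      linarith
    rw [intervalIntegral.integral_const_mul, hnorm, mul_one] at hmono
    exact hmono
  obtain ⟨ymin, hyminm, hymin⟩ := isCompact_Icc.exists_isMinOn (nonempty_Icc.2 hH.le) hFcont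
  obtain ⟨ymax, hymaxm, hymax⟩ := isCompact_Icc.exists_isMaxOn (nonempty_Icc.2 hH.le) hFcont
  have hintlow : H * F ymin ≤ ∫ y in (0:ℝ)..H, F y := by
    have h := intervalIntegral.integral_mono_on hH.le intervalIntegrable_const
      (hII _ hFcont 0 H h0mem hHmem) (fun y hy => hymin hy)
    rw [intervalIntegral.integral_const, smul_eq_mul, sub_zero] at h
    linarith [h]
  have hinthigh : (∫ y in (0:ℝ)..H, F y) ≤ H * F ymax := by
    have h := intervalIntegral.integral_mono_on hH.le (hII _ hFcont 0 H h0mem hHmem)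
      intervalIntegrable_const (fun y hy => hymax hy)
    rw [intervalIntegral.integral_const, smul_eq_mul, sub_zero] at h
    linarith [h]
  have hFub : ∀ y ∈ Set.Icc (0:ℝ) H, F y ≤ M₂ := by
    intro y hy
    have hFymin : F ymin ≤ M₁ / H := by rw [le_div_iff₀ hH, mul_comm]; linarith
    calc F y ≤ E * F ymin := hcomp y hy ymin hyminm
    _ ≤ E * (M₁ / H) := mul_le_mul_of_nonneg_left hFymin hE0.le
    _ = M₂ := by rw [hM₂def]; ring
  have hFlb : ∀ y ∈ Set.Icc (0:ℝ) H, F₀ ≤ F y := by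
    intro y hy
    have hFymax : c_m / H ≤ F ymax := by rw [div_le_iff₀ hH, mul_comm]; linarith
    have h1 : F ymax ≤ E * F y := hcomp ymax hymaxm y hy
    have h3 : c_m / H ≤ E * F y := le_trans hFymax h1
    rw [div_le_iff₀ hH] at h3
    rw [hF₀def, div_le_iff₀ (by positivity)]
    linarith [h3]
  have hbnd : ∀ y ∈ Set.Icc (0:ℝ) H, |u y * u' y| ≤ M₂ * sR * μ := by
    intro y hy
    have hq := hq0 y hy
    have hFy := hFub y hy
    simp only [hFdef] at hFy
    have hq2 : 0 ≤ u' y ^ 2 / q y := div_nonneg (sq_nonneg _) hq.le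
    have h1 : u y ^ 2 ≤ M₂ := by linarith
    have h2 : u' y ^ 2 ≤ R' * μ ^ 2 * M₂ := by
      have hq' : u' y ^ 2 / q y ≤ M₂ := by linarith [sq_nonneg (u y)]
      rw [div_le_iff₀ hq] at hq'
      calc u' y ^ 2 ≤ M₂ * q y := hq'
      _ ≤ M₂ * (R' * μ ^ 2) := mul_le_mul_of_nonneg_left (hqM y hy) hM₂0.le
      _ = R' * μ ^ 2 * M₂ := by ring
    have hsq : (u y * u' y) ^ 2 ≤ (M₂ * sR * μ) ^ 2 := by
      have e : (M₂ * sR * μ) ^ 2 = M₂ * (R' * μ ^ 2 * M₂) := by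
        rw [mul_pow, mul_pow, hsR2]; ring
      rw [e, mul_pow]
      exact mul_le_mul h1 h2 (sq_nonneg _) hM₂0.le
    calc |u y * u' y| = Real.sqrt ((u y * u' y) ^ 2) := (Real.sqrt_sq_eq_abs _).symm
    _ ≤ Real.sqrt ((M₂ * sR * μ) ^ 2) := Real.sqrt_le_sqrt hsq
    _ = M₂ * sR * μ := Real.sqrt_sq (by positivity)
  have hA11 : (∫ y in a..b, u' y ^ 2) ≤ (∫ y in a..b, q y * u y ^ 2) + 2 * (M₂ * sR * μ) := by
    have hFTCab := hFTC a b hamem hbmem hab.le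
    rw [intervalIntegral.integral_sub (hII _ cu'2 a b hamem hbmem)
      (hII _ cqu2 a b hamem hbmem)] at hFTCab
    have h1 := hbnd a hamem
    have h2 := hbnd b hbmem
    linarith [le_abs_self (u b * u' b), neg_abs_le (u a * u' a)]
  have hA12 : (∫ y in a..b, u' y ^ 2 / q y) ≤ R * (∫ y in a..b, u y ^ 2) + C₃ / μ := by
    have hmono : (∫ y in a..b, u' y ^ 2 / q y)
        ≤ ∫ y in a..b, (c_M / (ε * μ ^ 2)) * u' y ^ 2 :=
      intervalIntegral.integral_mono_on hab.le (hII _ cu'q a b hamem hbmem)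
        (hII _ (continuousOn_const.mul cu'2) a b hamem hbmem)
        (fun y hy => hpoint4 y (habH hy))
    rw [intervalIntegral.integral_const_mul] at hmono
    have hqu : (∫ y in a..b, q y * u y ^ 2) ≤ R' * μ ^ 2 * ∫ y in a..b, u y ^ 2 := by
      have h := intervalIntegral.integral_mono_on hab.le (hII _ cqu2 a b hamem hbmem)
        (hII _ (continuousOn_const.mul cu2) a b hamem hbmem)
        (fun y hy => mul_le_mul_of_nonneg_right (hqM y (habH hy)) (sq_nonneg _))
      simp only [Pi.mul_apply] at h
      rwa [intervalIntegral.integral_const_mul] at h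
    have hchain : c_M / (ε * μ ^ 2) * (∫ y in a..b, u' y ^ 2)
        ≤ c_M / (ε * μ ^ 2) * (R' * μ ^ 2 * (∫ y in a..b, u y ^ 2) + 2 * (M₂ * sR * μ)) :=
      mul_le_mul_of_nonneg_left (by linarith) (by positivity)
    have heqv : c_M / (ε * μ ^ 2) * (R' * μ ^ 2 * (∫ y in a..b, u y ^ 2) + 2 * (M₂ * sR * μ))
        = R * (∫ y in a..b, u y ^ 2) + C₃ / μ := by
      rw [hRdef, hC₃def]; field_simp
    linarith
  have hA13 : (b - a) * F₀ ≤ (∫ y in a..b, u y ^ 2) + ∫ y in a..b, u' y ^ 2 / q y := by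
    have hmono : (∫ _y in a..b, F₀) ≤ ∫ y in a..b, F y :=
      intervalIntegral.integral_mono_on hab.le intervalIntegrable_const
        (hII _ hFcont a b hamem hbmem) (fun y hy => hFlb y (habH hy))
    rw [intervalIntegral.integral_const, smul_eq_mul] at hmono
    rw [hFsplit a b hamem hbmem] at hmono
    linarith
  have hA14 : C₃ / μ ≤ (b - a) * F₀ / 2 := by
    have hP : 0 < (b - a) * F₀ := by positivity
    have hμ' : 2 * C₃ / ((b - a) * F₀) + 1 ≤ μ := le_trans (le_max_right _ _) hμ
    rw [div_le_div_iff₀ hμ0 two_pos]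
    have hkey : (b - a) * F₀ * (2 * C₃ / ((b - a) * F₀)) = 2 * C₃ :=
      mul_div_cancel₀ _ hP.ne'
    have h5 := mul_le_mul_of_nonneg_left hμ' hP.le
    linarith [hkey, hP, hC₃0, h5, mul_add ((b - a) * F₀) (2 * C₃ / ((b - a) * F₀)) 1]
  have hA15 : (b - a) * F₀ / (2 * (1 + R)) ≤ ∫ y in a..b, u y ^ 2 := by
    rw [div_le_iff₀ (by positivity)]
    linarith [hA13, hA12, hA14]
  have hfin : (1 / c_M) * (∫ y in a..b, u y ^ 2) ≤ ∫ y in a..b, u y ^ 2 / c y := by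
    have hmono : (∫ y in a..b, (1 / c_M) * u y ^ 2) ≤ ∫ y in a..b, u y ^ 2 / c y := by
      apply intervalIntegral.integral_mono_on hab.le
        (hII _ (continuousOn_const.mul cu2) a b hamem hbmem) (hII _ cuc a b hamem hbmem)
      intro y hy
      have hy' := habH hy
      have hcy := hc_pos y hy'
      have h2 := (hcbounds y hy').2
      simp only [Pi.mul_apply]
      rw [one_div, inv_mul_eq_div, div_le_div_iff₀ hcM hcy]
      exact mul_le_mul_of_nonneg_left h2 (sq_nonneg _)
    rwa [intervalIntegral.integral_const_mul] at hmono
  have hdle : (b - a) * F₀ / (2 * (1 + R) * c_M) ≤ (1 / c_M) * ∫ y in a..b, u y ^ 2 := by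
    have h := mul_le_mul_of_nonneg_left hA15 (by positivity : (0:ℝ) ≤ 1 / c_M)
    have heqv : (1 / c_M) * ((b - a) * F₀ / (2 * (1 + R))) = (b - a) * F₀ / (2 * (1 + R) * c_M) := by
      field_simp
    linarith
  linarith [hfin, hdle]
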